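/- There exist permutations σ₁, σ₂, σ₃ of {1, …, 30} such that σ₁ ∘ σ₂ ∘ σ₃ = id, the subgroup generated by σ₁, σ₂, σ₃ acts transitively on {1, …, 30}, and the multisets of orbit sizes of the cyclic groups generated by σ₁, σ₂, σ₃ are, respectively, {6,6,3,3,2,2,1,1,1,1,1,1,1,1}, {16,5,4,2,1,1,1}, and {14,8,4,3,1}. -/

import Mathlib

/-- The number of orbits of the cyclic group generated by a permutation `σ`
(i.e., the number of cycles of `σ`, counting fixed points as cycles of length 1). -/
noncomputable def cycleCount {α : Type*} [Finite α] (σ : Equiv.Perm α) : ℕ :=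
  Nat.card (MulAction.orbitRel.Quotient (Subgroup.zpowers σ) α)

/-- The multiset of sizes of the orbits of the cyclic group generated by a permutation `σ`
(i.e., the cycle type of `σ`, with fixed points contributing parts equal to 1). -/
noncomputable def orbitSizes {α : Type*} [Finite α] (σ : Equiv.Perm α) : Multiset ℕ :=
  letI := Fintype.ofFinite (MulAction.orbitRel.Quotient (Subgroup.zpowers σ) α)
  (Finset.univ : Finset (MulAction.orbitRel.Quotient (Subgroup.zpowers σ) α)).val.map
    fun q => Nat.card q.orbit

/-- Build a permutation from explicit forward and backward functions. -/
def mkPerm {n : ℕ} (f g : Fin n → Fin n) (h1 : ∀ x, g (f x) = x) (h2 : ∀ x, f (g x) = x) :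
    Equiv.Perm (Fin n) := ⟨f, g, h1, h2⟩

lemma orbitSizes_eq_of_cycleFun {n k : ℕ} (σ : Equiv.Perm (Fin n)) (c : Fin n → Fin k)
    (r : Fin k → Fin n)
    (h1 : ∀ x, c (σ x) = c x)
    (h2 : ∀ i, c (r i) = i)
    (h3 : ∀ x, ∃ m ∈ List.range n, σ^[m] (r (c x)) = x) :
    orbitSizes σ = Finset.univ.val.map
      (fun i : Fin k => (Finset.univ.filter fun y => c y = i).card) := by
  classical
  have hn : ∀ (m : ℕ) (x : Fin n), c ((σ ^ m) x) = c x := by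
    intro m
    induction m with
    | zero => intro x; simp
    | succ m ih =>
        intro x
        rw [pow_succ', Equiv.Perm.mul_apply, h1, ih]
  have hz : ∀ (j : ℤ) (x : Fin n), c ((σ ^ j) x) = c x := by
    intro j x
    rcases j with m | m
    · simpa using hn m x
    · rw [zpow_negSucc]
      have := hn (m + 1) ((σ ^ (m + 1))⁻¹ x)
      rw [Equiv.Perm.coe_inv, Equiv.apply_symm_apply] at this
      exact this.symm
  have same_iff : ∀ x y : Fin n,
      y ∈ MulAction.orbit (Subgroup.zpowers σ) x ↔ c y = c x := by
    intro x y
    constructor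
    · rintro ⟨⟨g, hg⟩, rfl⟩
      obtain ⟨j, rfl⟩ := Subgroup.mem_zpowers_iff.mp hg
      exact hz j x
    · intro hc
      obtain ⟨m, _, hm⟩ := h3 x
      obtain ⟨m', _, hm'⟩ := h3 y
      rw [Equiv.Perm.iterate_eq_pow] at hm hm'
      refine ⟨⟨σ ^ ((m' : ℤ) - m), Subgroup.mem_zpowers_iff.mpr ⟨_, rfl⟩⟩, ?_⟩
      show (σ ^ ((m' : ℤ) - m)) x = y
      have hx : ((σ ^ m)⁻¹ : Equiv.Perm (Fin n)) x = r (c y) := by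
        rw [← hm, Equiv.Perm.coe_inv, Equiv.symm_apply_apply, hc]
      rw [zpow_sub, zpow_natCast, zpow_natCast, Equiv.Perm.mul_apply, hx, hm']
  have card_orbit : ∀ x : Fin n, Nat.card (MulAction.orbit (Subgroup.zpowers σ) x) =
      (Finset.univ.filter fun y => c y = c x).card := by
    intro x
    have hset : MulAction.orbit (Subgroup.zpowers σ) x = {y | c y = c x} :=
      Set.ext fun y => same_iff x y
    rw [hset, Nat.card_coe_set_eq, Set.ncard_eq_toFinset_card', Set.toFinset_setOf]
  -- the equivalence between the orbit quotient and `Fin k`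
  letI inst := Fintype.ofFinite
    (MulAction.orbitRel.Quotient (Subgroup.zpowers σ) (Fin n))
  have wd : ∀ a b : Fin n,
      MulAction.orbitRel (Subgroup.zpowers σ) (Fin n) a b → c a = c b := by
    intro a b hab
    rw [MulAction.orbitRel_apply] at hab
    exact (same_iff b a).mp hab
  let e : MulAction.orbitRel.Quotient (Subgroup.zpowers σ) (Fin n) ≃ Fin k :=
    { toFun := fun q => Quotient.liftOn' q c wd
      invFun := fun i => Quotient.mk'' (r i)
      left_inv := by
        intro q
        induction q using Quotient.inductionOn' with
        | h x =>
          exact Quotient.sound'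
            ((MulAction.orbitRel_apply).mpr ((same_iff x (r (c x))).mpr (by rw [h2])))
      right_inv := fun i => h2 i }
  show ((Finset.univ : Finset
      (MulAction.orbitRel.Quotient (Subgroup.zpowers σ) (Fin n))).val.map
      fun q => Nat.card q.orbit) = _
  have huniv : (Finset.univ : Finset
        (MulAction.orbitRel.Quotient (Subgroup.zpowers σ) (Fin n))).val =
      (Finset.univ : Finset (Fin k)).val.map e.symm := by
    rw [← Finset.map_univ_equiv e.symm]
    rfl
  rw [huniv, Multiset.map_map]
  apply Multiset.map_congr rfl
  intro i _
  show Nat.card (MulAction.orbitRel.Quotient.orbit (Quotient.mk'' (r i))) = _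
  rw [MulAction.orbitRel.Quotient.orbit_mk, card_orbit, h2]

def f1 : Fin 30 → Fin 30 := ![1,22,2,25,13,7,12,27,11,9,10,26,6,4,14,15,16,17,21,19,18,20,5,3,23,28,8,0,29,24]
def g1 : Fin 30 → Fin 30 := ![27,0,2,23,13,22,12,5,26,9,10,8,6,4,14,15,16,17,20,19,21,18,1,24,29,3,11,7,25,28]
def c1 : Fin 30 → Fin 14 := ![0,0,6,1,4,0,5,0,2,7,8,2,5,4,9,10,11,12,3,13,3,3,0,1,1,1,2,0,1,1]
def r1 : Fin 14 → Fin 30 := ![0,3,8,18,4,6,2,9,10,14,15,16,17,19]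
def f2 : Fin 30 → Fin 30 := ![12,20,18,14,27,24,7,2,17,21,1,13,19,4,22,0,3,8,28,10,6,5,29,23,15,25,26,11,9,16]
def g2 : Fin 30 → Fin 30 := ![15,10,7,16,13,21,20,6,17,28,19,27,0,11,3,24,29,8,2,12,1,9,14,23,5,25,26,4,18,22]
def c2 : Fin 30 → Fin 7 := ![0,0,0,1,2,0,0,0,3,0,0,2,0,2,1,0,1,3,0,0,0,0,1,4,0,5,6,2,0,1]
def r2 : Fin 7 → Fin 30 := ![0,3,4,8,23,25,26]
def f3 : Fin 30 → Fin 30 := ![4,15,7,23,11,14,0,21,26,28,19,17,20,13,3,24,29,8,1,12,9,2,10,5,22,16,27,6,25,18]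
def g3 : Fin 30 → Fin 30 := ![6,18,21,14,0,23,27,2,17,20,22,4,19,13,5,1,25,11,29,10,12,7,24,3,15,28,8,26,9,16]
def c3 : Fin 30 → Fin 5 := ![1,0,3,2,1,2,1,3,1,0,0,1,0,4,2,0,0,1,0,0,0,3,0,2,0,0,1,1,0,0]
def r3 : Fin 5 → Fin 30 := ![1,0,3,2,13]

def sig1 : Equiv.Perm (Fin 30) := mkPerm f1 g1 (by decide) (by decide)
def sig2 : Equiv.Perm (Fin 30) := mkPerm f2 g2 (by decide) (by decide)
def sig3 : Equiv.Perm (Fin 30) := mkPerm f3 g3 (by decide) (by decide)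

/-- Realizability of the degree-30 branch-data triple
`[6, 6, 3, 3, 2, 2, 1, 1, 1, 1, 1, 1, 1, 1]`, `[16, 5, 4, 2, 1, 1, 1]`, `[14, 8, 4, 3, 1]`
by a transitive permutation triple with product the identity. -/
theorem realizable_triple_18 :
    ∃ σ₁ σ₂ σ₃ : Equiv.Perm (Fin 30),
      σ₁ * σ₂ * σ₃ = 1 ∧
      (∀ x y : Fin 30,
        ∃ g ∈ Subgroup.closure ({σ₁, σ₂, σ₃} : Set (Equiv.Perm (Fin 30))), g x = y) ∧
      orbitSizes σ₁ = ({6, 6, 3, 3, 2, 2, 1, 1, 1, 1, 1, 1, 1, 1} : Multiset ℕ) ∧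
      orbitSizes σ₂ = ({16, 5, 4, 2, 1, 1, 1} : Multiset ℕ) ∧
      orbitSizes σ₃ = ({14, 8, 4, 3, 1} : Multiset ℕ) := by
  refine ⟨sig1, sig2, sig3, ?_, ?_, ?_, ?_, ?_⟩
  · apply Equiv.ext
    decide
  · -- transitivity
    set H := Subgroup.closure ({sig1, sig2, sig3} : Set (Equiv.Perm (Fin 30))) with hH
    have h2 : sig2 ∈ H := Subgroup.subset_closure (by simp)
    have h3 : sig3 ∈ H := Subgroup.subset_closure (by simp)
    set P : Fin 30 → Prop := fun x => ∃ g ∈ H, g 0 = x with hP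
    have s2 : ∀ x, P x → P (sig2 x) := by
      rintro x ⟨g, hg, he⟩
      exact ⟨sig2 * g, mul_mem h2 hg, by rw [Equiv.Perm.mul_apply, he]⟩
    have s3 : ∀ x, P x → P (sig3 x) := by
      rintro x ⟨g, hg, he⟩
      exact ⟨sig3 * g, mul_mem h3 hg, by rw [Equiv.Perm.mul_apply, he]⟩
    have p0 : P 0 := ⟨1, one_mem H, rfl⟩
    have p12 : P 12 := s2 0 p0
    have p19 : P 19 := s2 12 p12
    have p10 : P 10 := s2 19 p19
    have p1 : P 1 := s2 10 p10
    have p20 : P 20 := s2 1 p1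
    have p6 : P 6 := s2 20 p20
    have p7 : P 7 := s2 6 p6
    have p2 : P 2 := s2 7 p7
    have p18 : P 18 := s2 2 p2
    have p28 : P 28 := s2 18 p18
    have p9 : P 9 := s2 28 p28
    have p21 : P 21 := s2 9 p9
    have p5 : P 5 := s2 21 p21
    have p24 : P 24 := s2 5 p5
    have p15 : P 15 := s2 24 p24
    -- sig3 cycles
    have p4 : P 4 := s3 0 p0
    have p11 : P 11 := s3 4 p4
    have p17 : P 17 := s3 11 p11
    have p8 : P 8 := s3 17 p17
    have p26 : P 26 := s3 8 p8
    have p27 : P 27 := s3 26 p26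
    have p22 : P 22 := s3 24 p24
    have p25 : P 25 := s3 28 p28
    have p16 : P 16 := s3 25 p25
    have p29 : P 29 := s3 16 p16
    have p14 : P 14 := s3 5 p5
    have p3 : P 3 := s3 14 p14
    have p23 : P 23 := s3 3 p3
    have p13 : P 13 := s3 13 (s2 11 (s2 27 (s2 4 p4)))
    have pall : ∀ x : Fin 30, P x := by
      intro x
      fin_cases x <;> assumption
    intro x y
    obtain ⟨gx, hgx, hgx0⟩ := pall x
    obtain ⟨gy, hgy, hgy0⟩ := pall y
    refine ⟨gy * gx⁻¹, mul_mem hgy (inv_mem hgx), ?_⟩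
    rw [Equiv.Perm.mul_apply, ← hgx0, Equiv.Perm.coe_inv, Equiv.symm_apply_apply, hgy0]
  · rw [orbitSizes_eq_of_cycleFun sig1 c1 r1 (by decide) (by decide) (by decide)]
    decide
  · rw [orbitSizes_eq_of_cycleFun sig2 c2 r2 (by decide) (by decide) (by decide)]
    decide
  · rw [orbitSizes_eq_of_cycleFun sig3 c3 r3 (by decide) (by decide) (by decide)]
    decide
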